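/- Let the grid on X, Y be endowed with a unique sink orientation, let i ≥ 1 be an integer, and let w be a vertex with refined out-degree (2^{i−1}, 2^{i−1}). Then for every vertex u such that there is no nonempty directed path from w to u (i.e. ¬(w →⁺ u)), one has |Φ(u) ∩ Φ(w)| ≥ 2^{i−1}. -/

import Mathlib

open Finset

/-- An assignment of directions to the edges of the grid on `X`, `Y`:
`out u v = true` means the edge between `u` and `v` is directed from `u` to `v`. -/
structure GridOrientation (X Y : Type) where
  out : X × Y → X × Y → Bool

namespace GridOrientation

variable {X Y : Type} [Fintype X] [Fintype Y] [DecidableEq X] [DecidableEq Y]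

/-- Two distinct vertices of the grid are adjacent iff they agree in one coordinate. -/
def Adj (u v : X × Y) : Prop := u ≠ v ∧ (u.1 = v.1 ∨ u.2 = v.2)

/-- `out` is a genuine orientation of the grid: directed edges go along edges of the
grid, and each edge gets exactly one direction. -/
def IsOrientation (o : GridOrientation X Y) : Prop :=
  (∀ u v, o.out u v = true → Adj u v) ∧
  (∀ u v, Adj u v → (o.out u v = true ↔ ¬ o.out v u = true))

/-- `v` is a sink of the face `A × B`. -/
def IsFaceSink (o : GridOrientation X Y) (A : Finset X) (B : Finset Y) (v : X × Y) : Prop :=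
  v.1 ∈ A ∧ v.2 ∈ B ∧ ∀ u : X × Y, u.1 ∈ A → u.2 ∈ B → ¬ o.out v u = true

/-- A unique sink orientation: an orientation such that every nonempty face has a
unique sink. -/
def IsUSO (o : GridOrientation X Y) : Prop :=
  o.IsOrientation ∧
  ∀ (A : Finset X) (B : Finset Y), A.Nonempty → B.Nonempty →
    ∃! v : X × Y, o.IsFaceSink A B v

/-- `Φ_X(v)`. -/
def phiX (o : GridOrientation X Y) (v : X × Y) : Finset X :=
  Finset.univ.filter fun x => o.out v (x, v.2) = true

/-- `Φ_Y(v)`. -/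
def phiY (o : GridOrientation X Y) (v : X × Y) : Finset Y :=
  Finset.univ.filter fun y => o.out v (v.1, y) = true

/-- `Φ(v) = Φ_X(v) ∪ Φ_Y(v) ⊆ X ⊔ Y`. -/
def phi (o : GridOrientation X Y) (v : X × Y) : Finset (X ⊕ Y) :=
  (o.phiX v).disjSum (o.phiY v)

/-- `u →⁺ v`: there is a nonempty directed path from `u` to `v`. -/
def Reaches (o : GridOrientation X Y) (u v : X × Y) : Prop :=
  Relation.TransGen (fun a b => o.out a b = true) u v

/-- A (global) sink: a vertex with no outgoing edge. -/
def IsSink (o : GridOrientation X Y) (v : X × Y) : Prop :=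
  ∀ u : X × Y, ¬ o.out v u = true

/-- The out-neighbor `v⟨h⟩` of `v` determined by the pivot `h ∈ X ⊔ Y`. -/
def pivotStep (v : X × Y) : X ⊕ Y → X × Y
  | Sum.inl x => (x, v.2)
  | Sum.inr y => (v.1, y)

/-- `f` is the expected-hitting-time function of the set `W`: it vanishes on `W` and
satisfies the one-step recurrence off `W`. -/
def IsHittingTimeFun (o : GridOrientation X Y) (W : Set (X × Y)) (f : X × Y → ℝ) : Prop :=
  (∀ v ∈ W, f v = 0) ∧
  ∀ v ∉ W, f v = 1 + (1 / ((o.phi v).card : ℝ)) *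
      ∑ u : X × Y, (if o.out v u then f u else 0)

/-- `w` is the `i`-th milestone vertex: for `i = 0` the global sink, for `i ≥ 1` the
vertex of refined out-degree `(2^(i-1), 2^(i-1))`. -/
def IsMilestone (o : GridOrientation X Y) (i : ℕ) (w : X × Y) : Prop :=
  if i = 0 then o.IsSink w
  else (o.phiX w).card = 2 ^ (i - 1) ∧ (o.phiY w).card = 2 ^ (i - 1)

/-- The milestone set `W^i` associated with the `i`-th milestone vertex `w`. -/
def milestoneSet (o : GridOrientation X Y) (i : ℕ) (w : X × Y) : Set (X × Y) :=
  if i = 0 then {w} else {v | o.Reaches w v}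

end GridOrientation

/-- `L = 1 + ⌊log₂ min (|X|-1) (|Y|-1)⌋`, the number of milestones. -/
def gridL (X Y : Type) [Fintype X] [Fintype Y] : ℕ :=
  1 + Nat.log 2 (min (Fintype.card X - 1) (Fintype.card Y - 1))

/-- The `n`-th harmonic number, as a real number. -/
noncomputable def harmonicR (n : ℕ) : ℝ := ∑ k ∈ Finset.range n, 1 / (k + 1)

namespace GridOrientation

variable {X Y : Type} [Fintype X] [Fintype Y] [DecidableEq X] [DecidableEq Y]
variable {o : GridOrientation X Y}

lemma not_out_self' (ho : o.IsOrientation) (v : X × Y) : ¬ o.out v v = true :=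
  fun h => (ho.1 v v h).1 rfl

lemma out_of_not_out' (ho : o.IsOrientation) {u v : X × Y} (h : Adj u v)
    (hn : ¬ o.out u v = true) : o.out v u = true := by
  by_contra hvu
  exact hn ((ho.2 u v h).2 hvu)

lemma sink_eq' (huso : o.IsUSO) {A : Finset X} {B : Finset Y} (hA : A.Nonempty) (hB : B.Nonempty)
    {v v' : X × Y} (h : o.IsFaceSink A B v) (h' : o.IsFaceSink A B v') : v = v' := by
  obtain ⟨s, _, hu⟩ := huso.2 A B hA hB
  rw [hu v h, hu v' h']

lemma mem_phiX' {v : X × Y} {x : X} : x ∈ o.phiX v ↔ o.out v (x, v.2) = true := by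
  simp [phiX]

lemma mem_phiY' {v : X × Y} {y : Y} : y ∈ o.phiY v ↔ o.out v (v.1, y) = true := by
  simp [phiY]

lemma phi_inter_card' (u w : X × Y) :
    (o.phi u ∩ o.phi w).card = (o.phiX u ∩ o.phiX w).card + (o.phiY u ∩ o.phiY w).card := by
  have h : o.phi u ∩ o.phi w = (o.phiX u ∩ o.phiX w).disjSum (o.phiY u ∩ o.phiY w) := by
    ext c; cases c <;> simp [phi]
  rw [h, Finset.card_disjSum]

/-- A source of a 2×2 square face reaches the antipodal vertex. -/
lemma source_square (huso : o.IsUSO) {w : X × Y} {x : X} {y : Y}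
    (hx : x ≠ w.1) (hy : y ≠ w.2)
    (ha : o.out w (x, w.2) = true) (hb : o.out w (w.1, y) = true) :
    o.Reaches w (x, y) := by
  by_cases h1 : o.out (x, w.2) (x, y) = true
  · exact Relation.TransGen.tail (Relation.TransGen.single (b := (x, w.2)) ha) h1
  by_cases h2 : o.out (w.1, y) (x, y) = true
  · exact Relation.TransGen.tail (Relation.TransGen.single (b := (w.1, y)) hb) h2
  exfalso
  have hadj_a : Adj w (x, w.2) := ⟨fun h => hx (congrArg Prod.fst h).symm, Or.inr rfl⟩
  have hadj_b : Adj w (w.1, y) := ⟨fun h => hy (congrArg Prod.snd h).symm, Or.inl rfl⟩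
  have hsa : o.IsFaceSink {w.1, x} {w.2, y} (x, w.2) := by
    refine ⟨by simp, by simp, ?_⟩
    rintro ⟨u1, u2⟩ hu1 hu2 hout
    have had := huso.1.1 _ _ hout
    simp only [Finset.mem_insert, Finset.mem_singleton] at hu1 hu2
    rcases hu1 with rfl | rfl <;> rcases hu2 with rfl | rfl
    · exact (huso.1.2 _ _ hadj_a).1 ha (by rwa [Prod.mk.eta] at hout)
    · rcases had.2 with h | h
      · exact hx h
      · exact hy h.symm
    · exact had.1 rfl
    · exact h1 hout
  have hsb : o.IsFaceSink {w.1, x} {w.2, y} (w.1, y) := by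
    refine ⟨by simp, by simp, ?_⟩
    rintro ⟨u1, u2⟩ hu1 hu2 hout
    have had := huso.1.1 _ _ hout
    simp only [Finset.mem_insert, Finset.mem_singleton] at hu1 hu2
    rcases hu1 with rfl | rfl <;> rcases hu2 with rfl | rfl
    · exact (huso.1.2 _ _ hadj_b).1 hb (by rwa [Prod.mk.eta] at hout)
    · exact had.1 rfl
    · rcases had.2 with h | h
      · exact hx h.symm
      · exact hy h
    · exact h2 hout
  have heq := sink_eq' huso (Finset.insert_nonempty _ _) (Finset.insert_nonempty _ _) hsa hsb
  exact hx (congrArg Prod.fst heq)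

/-- A sink of a 2×2 square face is reached from the antipodal vertex. -/
lemma sink_square (huso : o.IsUSO) {u v : X × Y}
    (hx : v.1 ≠ u.1) (hy : v.2 ≠ u.2)
    (ha : ¬ o.out u (v.1, u.2) = true) (hb : ¬ o.out u (u.1, v.2) = true) :
    o.Reaches v u := by
  have hadj_a : Adj u (v.1, u.2) := ⟨fun h => hx (congrArg Prod.fst h).symm, Or.inr rfl⟩
  have hadj_b : Adj u (u.1, v.2) := ⟨fun h => hy (congrArg Prod.snd h).symm, Or.inl rfl⟩
  have hau : o.out (v.1, u.2) u = true := out_of_not_out' huso.1 hadj_a ha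
  have hbu : o.out (u.1, v.2) u = true := out_of_not_out' huso.1 hadj_b hb
  by_cases h1 : o.out v (v.1, u.2) = true
  · exact Relation.TransGen.tail (Relation.TransGen.single (b := (v.1, u.2)) h1) hau
  by_cases h2 : o.out v (u.1, v.2) = true
  · exact Relation.TransGen.tail (Relation.TransGen.single (b := (u.1, v.2)) h2) hbu
  exfalso
  have hsu : o.IsFaceSink {u.1, v.1} {u.2, v.2} u := by
    refine ⟨by simp, by simp, ?_⟩
    rintro ⟨u1, u2⟩ hu1 hu2 hout
    have had := huso.1.1 _ _ hout
    simp only [Finset.mem_insert, Finset.mem_singleton] at hu1 hu2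
    rcases hu1 with rfl | rfl <;> rcases hu2 with rfl | rfl
    · exact had.1 Prod.mk.eta.symm
    · exact hb hout
    · exact ha hout
    · rcases had.2 with h | h
      · exact hx h.symm
      · exact hy h.symm
  have hsv : o.IsFaceSink {u.1, v.1} {u.2, v.2} v := by
    refine ⟨by simp, by simp, ?_⟩
    rintro ⟨u1, u2⟩ hu1 hu2 hout
    have had := huso.1.1 _ _ hout
    simp only [Finset.mem_insert, Finset.mem_singleton] at hu1 hu2
    rcases hu1 with rfl | rfl <;> rcases hu2 with rfl | rfl
    · rcases had.2 with h | h
      · exact hx h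
      · exact hy h
    · exact h2 hout
    · exact h1 hout
    · exact had.1 Prod.mk.eta.symm
  exact hx (congrArg Prod.fst (sink_eq' huso (Finset.insert_nonempty _ _)
    (Finset.insert_nonempty _ _) hsv hsu))

end GridOrientation

/-- In a grid USO, if `w` has refined out-degree
`(2^(i-1), 2^(i-1))` (`i ≥ 1`), then every vertex `u` with no nonempty directed path
from `w` to `u` satisfies `|Φ(u) ∩ Φ(w)| ≥ 2^(i-1)`. -/
theorem card_inter_outmaps_ge
    {X Y : Type} [Fintype X] [Fintype Y] [DecidableEq X] [DecidableEq Y]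
    (hX : 2 ≤ Fintype.card X) (hY : 2 ≤ Fintype.card Y)
    (o : GridOrientation X Y) (huso : o.IsUSO)
    (i : ℕ) (hi : 1 ≤ i) (w : X × Y)
    (hw : (o.phiX w).card = 2 ^ (i - 1) ∧ (o.phiY w).card = 2 ^ (i - 1)) :
    ∀ u : X × Y, ¬ o.Reaches w u → 2 ^ (i - 1) ≤ (o.phi u ∩ o.phi w).card := by
  intro u hnr
  by_contra hlt
  push_neg at hlt
  rw [GridOrientation.phi_inter_card'] at hlt
  obtain ⟨hwX, hwY⟩ := hw
  have ho := huso.1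
  have hw1 : w.1 ∉ o.phiX w := fun h =>
    GridOrientation.not_out_self' ho w (by rw [GridOrientation.mem_phiX'] at h; rwa [Prod.mk.eta] at h)
  have hw2 : w.2 ∉ o.phiY w := fun h =>
    GridOrientation.not_out_self' ho w (by rw [GridOrientation.mem_phiY'] at h; rwa [Prod.mk.eta] at h)
  have hkpos : 0 < 2 ^ (i - 1) := Nat.pow_pos (by norm_num)
  -- case B : Φ_X(w) \ Φ_X(u) ⊆ {u.1}
  by_cases hB : ∀ x ∈ o.phiX w, x ∉ o.phiX u → x = u.1
  · -- then SX.card ≥ k - 1, so SY = ∅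
    have hsub : o.phiX w ⊆ insert u.1 (o.phiX u ∩ o.phiX w) := by
      intro x hx
      by_cases h : x ∈ o.phiX u
      · exact Finset.mem_insert_of_mem (Finset.mem_inter.2 ⟨h, hx⟩)
      · exact (hB x hx h) ▸ Finset.mem_insert_self _ _
    have hcard : 2 ^ (i - 1) ≤ (o.phiX u ∩ o.phiX w).card + 1 := by
      calc 2 ^ (i - 1) = (o.phiX w).card := hwX.symm
        _ ≤ (insert u.1 (o.phiX u ∩ o.phiX w)).card := Finset.card_le_card hsub
        _ ≤ (o.phiX u ∩ o.phiX w).card + 1 := Finset.card_insert_le _ _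
    have hSY : (o.phiY u ∩ o.phiY w) = ∅ := by
      rw [← Finset.card_eq_zero]; omega
    have hux : u.1 ∈ o.phiX w := by
      by_contra hux
      have hsub2 : o.phiX w ⊆ o.phiX u ∩ o.phiX w := by
        intro x hx
        by_cases h : x ∈ o.phiX u
        · exact Finset.mem_inter.2 ⟨h, hx⟩
        · exact absurd ((hB x hx h) ▸ hx) hux
      have := Finset.card_le_card hsub2
      omega
    have hne1 : u.1 ≠ w.1 := fun h => hw1 (h ▸ hux)
    by_cases hy : u.2 ∈ o.phiY w
    · have hne2 : u.2 ≠ w.2 := fun h => hw2 (h ▸ hy)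
      have := GridOrientation.source_square huso hne1 hne2
        (GridOrientation.mem_phiX'.1 hux) (GridOrientation.mem_phiY'.1 hy)
      rw [Prod.mk.eta] at this
      exact hnr this
    · obtain ⟨y₁, hy₁⟩ := Finset.card_pos.1 (hwY ▸ hkpos)
      have hne2 : y₁ ≠ w.2 := fun h => hw2 (h ▸ hy₁)
      have h1 := GridOrientation.source_square huso hne1 hne2
        (GridOrientation.mem_phiX'.1 hux) (GridOrientation.mem_phiY'.1 hy₁)
      have hy1u : y₁ ∉ o.phiY u := fun h =>
        (Finset.eq_empty_iff_forall_notMem.1 hSY y₁) (Finset.mem_inter.2 ⟨h, hy₁⟩)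
      have hadj : GridOrientation.Adj u (u.1, y₁) :=
        ⟨fun h => hy ((congrArg Prod.snd h) ▸ hy₁), Or.inl rfl⟩
      have hstep : o.out (u.1, y₁) u = true :=
        GridOrientation.out_of_not_out' ho hadj (fun h => hy1u (GridOrientation.mem_phiY'.2 h))
      exact hnr (h1.tail hstep)
  by_cases hC : ∀ y ∈ o.phiY w, y ∉ o.phiY u → y = u.2
  · -- symmetric case
    have hsub : o.phiY w ⊆ insert u.2 (o.phiY u ∩ o.phiY w) := by
      intro y hy
      by_cases h : y ∈ o.phiY u
      · exact Finset.mem_insert_of_mem (Finset.mem_inter.2 ⟨h, hy⟩)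
      · exact (hC y hy h) ▸ Finset.mem_insert_self _ _
    have hcard : 2 ^ (i - 1) ≤ (o.phiY u ∩ o.phiY w).card + 1 := by
      calc 2 ^ (i - 1) = (o.phiY w).card := hwY.symm
        _ ≤ (insert u.2 (o.phiY u ∩ o.phiY w)).card := Finset.card_le_card hsub
        _ ≤ (o.phiY u ∩ o.phiY w).card + 1 := Finset.card_insert_le _ _
    have hSX : (o.phiX u ∩ o.phiX w) = ∅ := by
      rw [← Finset.card_eq_zero]; omega
    have huy : u.2 ∈ o.phiY w := by
      by_contra huy
      have hsub2 : o.phiY w ⊆ o.phiY u ∩ o.phiY w := by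
        intro y hy
        by_cases h : y ∈ o.phiY u
        · exact Finset.mem_inter.2 ⟨h, hy⟩
        · exact absurd ((hC y hy h) ▸ hy) huy
      have := Finset.card_le_card hsub2
      omega
    have hne2 : u.2 ≠ w.2 := fun h => hw2 (h ▸ huy)
    by_cases hx : u.1 ∈ o.phiX w
    · have hne1 : u.1 ≠ w.1 := fun h => hw1 (h ▸ hx)
      have := GridOrientation.source_square huso hne1 hne2
        (GridOrientation.mem_phiX'.1 hx) (GridOrientation.mem_phiY'.1 huy)
      rw [Prod.mk.eta] at this
      exact hnr this
    · obtain ⟨x₁, hx₁⟩ := Finset.card_pos.1 (hwX ▸ hkpos)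
      have hne1 : x₁ ≠ w.1 := fun h => hw1 (h ▸ hx₁)
      have h1 := GridOrientation.source_square huso hne1 hne2
        (GridOrientation.mem_phiX'.1 hx₁) (GridOrientation.mem_phiY'.1 huy)
      have hx1u : x₁ ∉ o.phiX u := fun h =>
        (Finset.eq_empty_iff_forall_notMem.1 hSX x₁) (Finset.mem_inter.2 ⟨h, hx₁⟩)
      have hadj : GridOrientation.Adj u (x₁, u.2) :=
        ⟨fun h => hx ((congrArg Prod.fst h) ▸ hx₁), Or.inr rfl⟩
      have hstep : o.out (x₁, u.2) u = true :=
        GridOrientation.out_of_not_out' ho hadj (fun h => hx1u (GridOrientation.mem_phiX'.2 h))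
      exact hnr (h1.tail hstep)
  · -- case A : both complements contain a non-degenerate element
    push_neg at hB hC
    obtain ⟨x₀, hx₀w, hx₀u, hx₀ne⟩ := hB
    obtain ⟨y₀, hy₀w, hy₀u, hy₀ne⟩ := hC
    have hne1 : x₀ ≠ w.1 := fun h => hw1 (h ▸ hx₀w)
    have hne2 : y₀ ≠ w.2 := fun h => hw2 (h ▸ hy₀w)
    have h1 := GridOrientation.source_square huso hne1 hne2
      (GridOrientation.mem_phiX'.1 hx₀w) (GridOrientation.mem_phiY'.1 hy₀w)
    have h2 : o.Reaches (x₀, y₀) u := by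
      refine GridOrientation.sink_square huso hx₀ne hy₀ne ?_ ?_
      · exact fun h => hx₀u (GridOrientation.mem_phiX'.2 h)
      · exact fun h => hy₀u (GridOrientation.mem_phiY'.2 h)
    exact hnr (h1.trans h2)
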